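/- arXiv:2506.11296 — 2 statements merged into one kernel-verified Lean document; each statement's English description precedes it below -/
import Mathlib

section
/- Let n ∈ {2,3,...} and α ∈ [1/n, 1]. Then for every r ≥ 0, E_α(r) ≤ E_{α,α}(r) + ∑_{k=0}^{⌊(3n-2)/2⌋ - 1} γ_k r^k, where γ_k := 1/Γ(1+αk) − 1/Γ(α+αk). -/
open Real Filter Topology

/-- The two-parameter Mittag-Leffler function `E_{α,β}(z) = ∑ z^n / Γ(αn+β)`. -/
noncomputable def ML (a b z : ℝ) : ℝ :=
  ∑' n : ℕ, z ^ n / Real.Gamma (a * n + b)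

/-- Slope estimate from log-convexity: `Γ(x+a) ≥ Γ(x) * (x-1)^a` for `x ≥ 2`. -/
lemma gamma_growth {x a : ℝ} (ha : 0 < a) (hx : 2 ≤ x) :
    Real.Gamma x * (x - 1) ^ a ≤ Real.Gamma (x + a) := by
  have hx1 : (1 : ℝ) ≤ x - 1 := by linarith
  have h0 : (0 : ℝ) < x - 1 := by linarith
  have hxpos : (0 : ℝ) < x := by linarith
  have hxa : (0 : ℝ) < x + a := by linarith
  have hs := Real.convexOn_log_Gamma.slope_mono_adjacent
    (x := x - 1) (y := x) (z := x + a)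
    (Set.mem_Ioi.mpr h0) (Set.mem_Ioi.mpr hxa) (by linarith) (by linarith)
  have hGx : Real.Gamma x = (x - 1) * Real.Gamma (x - 1) := by
    have h := Real.Gamma_add_one (s := x - 1) (ne_of_gt h0)
    rw [sub_add_cancel] at h
    exact h
  have hGpos : 0 < Real.Gamma (x - 1) := Real.Gamma_pos_of_pos h0
  have hGxpos : 0 < Real.Gamma x := Real.Gamma_pos_of_pos hxpos
  have hGxapos : 0 < Real.Gamma (x + a) := Real.Gamma_pos_of_pos hxa
  have hlog : Real.log (Real.Gamma x) - Real.log (Real.Gamma (x - 1)) = Real.log (x - 1) := by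
    rw [hGx, Real.log_mul (ne_of_gt h0) (ne_of_gt hGpos)]
    ring
  simp only [Function.comp] at hs
  rw [show x - (x - 1) = (1 : ℝ) by ring, show x + a - x = a by ring, div_one, hlog] at hs
  rw [le_div_iff₀ ha] at hs
  have hs'' : a * Real.log (x - 1) + Real.log (Real.Gamma x) ≤
      Real.log (Real.Gamma (x + a)) := by nlinarith
  have h2 := Real.exp_le_exp.mpr hs''
  rw [Real.exp_add, Real.exp_log hGxpos, Real.exp_log hGxapos] at h2
  have hrp : (x - 1) ^ a = Real.exp (a * Real.log (x - 1)) := by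
    rw [Real.rpow_def_of_pos h0, mul_comm]
  rw [hrp, mul_comm]
  exact h2

/-- Summability of the Mittag-Leffler series. -/
lemma ml_summable {a b r : ℝ} (ha : 0 < a) (hb : 0 < b) (hr : 0 ≤ r) :
    Summable (fun k : ℕ => r ^ k / Real.Gamma (a * k + b)) := by
  set c : ℝ := max 1 ((2 * r + 1) ^ a⁻¹) with hc
  have hc1 : (1 : ℝ) ≤ c := le_max_left _ _
  apply summable_of_ratio_norm_eventually_le (r := 1 / 2) (by norm_num)
  have hev : ∀ᶠ k : ℕ in atTop, (c + 1 - b) / a ≤ (k : ℝ) :=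
    tendsto_natCast_atTop_atTop.eventually_ge_atTop _
  filter_upwards [hev] with k hk
  set x : ℝ := a * k + b with hx
  have hxc : c ≤ x - 1 := by
    rw [div_le_iff₀ ha] at hk
    have : c + 1 - b ≤ a * k := by nlinarith
    simp only [hx]; linarith
  have hx2 : (2 : ℝ) ≤ x := by linarith
  have hx1 : (1 : ℝ) ≤ x - 1 := by linarith
  have h2r : (0 : ℝ) ≤ 2 * r + 1 := by linarith
  have hpow : 2 * r + 1 ≤ (x - 1) ^ a := by
    have h1 : ((2 * r + 1) ^ a⁻¹ : ℝ) ^ a ≤ (x - 1) ^ a :=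
      Real.rpow_le_rpow (Real.rpow_nonneg h2r _)
        (le_trans (le_max_right _ _) hxc) (le_of_lt ha)
    rwa [← Real.rpow_mul h2r, inv_mul_cancel₀ (ne_of_gt ha), Real.rpow_one] at h1
  have hgrow : Real.Gamma x * (x - 1) ^ a ≤ Real.Gamma (x + a) := gamma_growth ha hx2
  have hGx : 0 < Real.Gamma x := Real.Gamma_pos_of_pos (by linarith)
  have hGxa : 0 < Real.Gamma (x + a) := Real.Gamma_pos_of_pos (by linarith)
  have hrk : (0 : ℝ) ≤ r ^ k := pow_nonneg hr k
  have harg : a * (↑(k + 1) : ℝ) + b = x + a := by push_cast; ring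
  rw [harg]
  rw [Real.norm_of_nonneg (by positivity), Real.norm_of_nonneg (by positivity)]
  rw [div_le_iff₀ hGxa, pow_succ]
  have hge : (2 * r + 1) * Real.Gamma x ≤ Real.Gamma (x + a) := by nlinarith
  have key : r ^ k * ((2 * r + 1) * Real.Gamma x) ≤ r ^ k * Real.Gamma (x + a) :=
    mul_le_mul_of_nonneg_left hge hrk
  have heq : (1 : ℝ) / 2 * (r ^ k / Real.Gamma x) * Real.Gamma (x + a)
      = r ^ k * Real.Gamma (x + a) / (2 * Real.Gamma x) := by ring
  rw [heq, le_div_iff₀ (by positivity)]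
  nlinarith [mul_nonneg hrk hGx.le]

/-- `Γ(x) ≤ 1` on `[1,2]`. -/
lemma gamma_le_one {x : ℝ} (h1 : 1 ≤ x) (h2 : x ≤ 2) : Real.Gamma x ≤ 1 := by
  have h := Real.convexOn_Gamma.2 (Set.mem_Ioi.mpr one_pos) (Set.mem_Ioi.mpr two_pos)
    (by linarith : (0 : ℝ) ≤ 2 - x) (by linarith : (0 : ℝ) ≤ x - 1)
    (by ring : (2 - x) + (x - 1) = 1)
  simp only [smul_eq_mul, Real.Gamma_one, Real.Gamma_two] at h
  rw [show (2 - x) * 1 + (x - 1) * 2 = x by ring] at h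
  linarith

theorem stmt4 (n : ℕ) (hn : 2 ≤ n) (α : ℝ) (hα1 : 1 / (n : ℝ) ≤ α) (hα2 : α ≤ 1)
    (r : ℝ) (hr : 0 ≤ r) :
    ML α 1 r ≤ ML α α r + ∑ k ∈ Finset.range ((3 * n - 2) / 2),
      (1 / Real.Gamma (1 + α * k) - 1 / Real.Gamma (α + α * k)) * r ^ k := by
  have hn0 : (0 : ℝ) < n := by positivity
  have hα0 : 0 < α := lt_of_lt_of_le (by positivity) hα1
  set K := (3 * n - 2) / 2 with hK
  have hKn : n ≤ K := by omega
  have hgamma : ∀ k : ℕ, n ≤ k → Real.Gamma (α + α * k) ≤ Real.Gamma (1 + α * k) := by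
    intro k hk
    have ht1 : (1 : ℝ) ≤ α * k := by
      have hkn : (n : ℝ) ≤ k := Nat.cast_le.mpr hk
      calc (1 : ℝ) = (1 / n) * n := by field_simp
        _ ≤ α * k := mul_le_mul hα1 hkn (le_of_lt hn0) (le_of_lt hα0)
    have hmono := Real.Gamma_strictMonoOn_Ici.monotoneOn
    by_cases hcase : α + α * k ≤ 2
    · have h1 : Real.Gamma (α + α * k) ≤ 1 := gamma_le_one (by linarith) hcase
      have h2 : (1 : ℝ) ≤ Real.Gamma (1 + α * k) := by
        have := hmono (Set.mem_Ici.mpr (le_refl (2 : ℝ)))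
          (Set.mem_Ici.mpr (by linarith : (2 : ℝ) ≤ 1 + α * k)) (by linarith)
        rwa [Real.Gamma_two] at this
      linarith
    · push_neg at hcase
      exact hmono (Set.mem_Ici.mpr (le_of_lt hcase))
        (Set.mem_Ici.mpr (by linarith)) (by linarith)
  have hs1 : Summable (fun k : ℕ => r ^ k / Real.Gamma (α * k + 1)) :=
    ml_summable hα0 one_pos hr
  have hs2 : Summable (fun k : ℕ => r ^ k / Real.Gamma (α * k + α)) :=
    ml_summable hα0 hα0 hr
  set g : ℕ → ℝ := fun k =>
    (1 / Real.Gamma (1 + α * k) - 1 / Real.Gamma (α + α * k)) * r ^ k with hg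
  have hgeq : ∀ k : ℕ, g k = r ^ k / Real.Gamma (α * k + 1) - r ^ k / Real.Gamma (α * k + α) := by
    intro k
    simp only [hg]
    rw [add_comm (1 : ℝ) (α * k), add_comm α (α * k)]
    ring
  have hgs : Summable g := by
    rw [funext hgeq]; exact hs1.sub hs2
  have htsum : ∑' k : ℕ, g k = ML α 1 r - ML α α r := by
    rw [funext hgeq, Summable.tsum_sub hs1 hs2]
    rfl
  have hsplit := Summable.sum_add_tsum_nat_add (f := g) K hgs
  have htail : ∑' j : ℕ, g (j + K) ≤ 0 := by
    apply tsum_nonpos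
    intro j
    have hjk : n ≤ j + K := le_trans hKn (Nat.le_add_left K j)
    have hΓ := hgamma (j + K) hjk
    have hΓ1 : 0 < Real.Gamma (α + α * ((j + K : ℕ) : ℝ)) :=
      Real.Gamma_pos_of_pos (by positivity)
    have hdiff : 1 / Real.Gamma (1 + α * ((j + K : ℕ) : ℝ)) -
        1 / Real.Gamma (α + α * ((j + K : ℕ) : ℝ)) ≤ 0 := by
      have := one_div_le_one_div_of_le hΓ1 hΓ
      linarith
    exact mul_nonpos_of_nonpos_of_nonneg hdiff (pow_nonneg hr _)
  have hfinal : ML α 1 r ≤ ML α α r + ∑ k ∈ Finset.range K, g k := by linarith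
  exact hfinal
end

section
/- Let n ∈ {2,3,...} and α ∈ [1/n, 1]. Then for every r > 0, E_α(r) ≥ (1/r^{n-1}) E_{α,α}(r) − (1/r^{n-1}) ∑_{k=0}^{⌊n-1+1/(2α)⌋} λ_k r^k + (1/r^{n-1}) ∑_{k=n-1}^{⌊n-1+1/(2α)⌋} β_k r^k, where λ_k := 1/Γ(α+kα) and β_k := 1/Γ(1+kα−α(n−1)). -/
open Real Filter Topology

lemma gammaBound : Real.eulerMascheroniConstant + 2 * Real.log 2 ≤ 2 := by
  have h1 : Real.eulerMascheroniConstant < Real.eulerMascheroniSeq' 32 :=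
    Real.eulerMascheroniConstant_lt_eulerMascheroniSeq' 32
  have h2 : Real.eulerMascheroniSeq' 32 = (harmonic 32 : ℝ) - Real.log 32 := by
    rw [Real.eulerMascheroniSeq']; norm_num
  have h3 : Real.log 32 = 5 * Real.log 2 := by
    rw [show (32:ℝ) = 2 ^ (5:ℕ) by norm_num, Real.log_pow]; push_cast; ring
  have h4 : (harmonic 32 : ℝ) < 40794/10000 := by
    have h : (harmonic 32 : ℚ) < 40794/10000 := by norm_num [harmonic, Finset.sum_range_succ]
    have := Rat.cast_lt (K := ℝ) |>.2 h
    rwa [show (((40794/10000 : ℚ)) : ℝ) = 40794/10000 by norm_num] at this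
  have h5 : (0.6931471803:ℝ) < Real.log 2 := Real.log_two_gt_d9
  norm_num at h5
  rw [h2, h3] at h1
  linarith

lemma derivGamma32 : ∃ d : ℝ, HasDerivAt Real.Gamma d (3/2 : ℝ) ∧ 0 ≤ d := by
  have h12 : HasDerivAt Real.Gamma
      (-(Real.sqrt π) * (Real.eulerMascheroniConstant + 2 * Real.log 2)) ((3/2:ℝ) - 1) := by
    have := Real.hasDerivAt_Gamma_one_half
    rwa [show (1/2:ℝ) = 3/2 - 1 by norm_num] at this
  have hid : HasDerivAt (fun x : ℝ => x - 1) 1 (3/2 : ℝ) := (hasDerivAt_id _).sub_const 1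
  have hcomp : HasDerivAt (fun x : ℝ => Real.Gamma (x - 1))
      ((-(Real.sqrt π) * (Real.eulerMascheroniConstant + 2 * Real.log 2)) * 1) (3/2 : ℝ) :=
    by have := HasDerivAt.comp (3/2:ℝ) h12 hid; exact this
  have hmul := hid.mul hcomp
  have hev : (fun x : ℝ => (x - 1) * Real.Gamma (x - 1)) =ᶠ[𝓝 (3/2:ℝ)] Real.Gamma := by
    filter_upwards [Ioi_mem_nhds (show (1:ℝ) < 3/2 by norm_num)] with x hx
    rw [← Real.Gamma_add_one (sub_ne_zero.2 (ne_of_gt hx)), sub_add_cancel]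
  refine ⟨_, hmul.congr_of_eventuallyEq hev.symm, ?_⟩
  have h1 : Real.Gamma ((3/2:ℝ) - 1) = Real.sqrt π := by
    rw [show (3/2:ℝ) - 1 = 1/2 by norm_num, Real.Gamma_one_half_eq]
  rw [h1]
  have h2 := gammaBound
  have h3 : (0:ℝ) ≤ Real.sqrt π := Real.sqrt_nonneg π
  nlinarith

lemma gammaMono32 {x y : ℝ} (hx : 3/2 ≤ x) (hxy : x ≤ y) :
    Real.Gamma x ≤ Real.Gamma y := by
  rcases eq_or_lt_of_le hxy with rfl | hlt
  · exact le_rfl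
  obtain ⟨d, hd, hd0⟩ := derivGamma32
  have hc := Real.convexOn_Gamma
  have h32y : (3/2:ℝ) < y := lt_of_le_of_lt hx hlt
  have hy0 : y ∈ Set.Ioi (0:ℝ) := by simp; linarith
  have hx0 : x ∈ Set.Ioi (0:ℝ) := by simp; linarith
  have h320 : (3/2:ℝ) ∈ Set.Ioi (0:ℝ) := by norm_num
  have hs1 : d ≤ slope Real.Gamma (3/2) y := hc.le_slope_of_hasDerivAt h320 hy0 h32y hd
  have hs2 : slope Real.Gamma (3/2) y ≤ slope Real.Gamma x y := by
    rcases eq_or_lt_of_le hx with rfl | hx32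
    · exact le_rfl
    rw [slope_comm Real.Gamma (3/2) y, slope_comm Real.Gamma x y]
    exact (hc.slope_mono hy0) ⟨h320, by simp; linarith⟩ ⟨hx0, by simp; linarith⟩ hx
  have h0 : 0 ≤ (Real.Gamma y - Real.Gamma x) / (y - x) := by
    have h := hd0.trans (hs1.trans hs2)
    rwa [slope_def_field] at h
  have hyx : 0 < y - x := sub_pos.2 hlt
  have := mul_nonneg h0 hyx.le
  rw [div_mul_cancel₀ _ hyx.ne'] at this
  linarith

lemma gammaRatio {x a : ℝ} (hx : 2 ≤ x) (ha : 0 < a) :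
    Real.Gamma x * (x - 1) ^ a ≤ Real.Gamma (x + a) := by
  have h1 : (0:ℝ) < x - 1 := by linarith
  have hx0 : (0:ℝ) < x := by linarith
  have hxa : (0:ℝ) < x + a := by linarith
  have hsl := Real.convexOn_log_Gamma.slope_mono_adjacent
    (Set.mem_Ioi.2 h1) (Set.mem_Ioi.2 hxa) (by linarith : x - 1 < x) (by linarith : x < x + a)
  simp only [Function.comp_apply] at hsl
  have hΓx : 0 < Real.Gamma x := Real.Gamma_pos_of_pos hx0
  have hΓx1 : 0 < Real.Gamma (x-1) := Real.Gamma_pos_of_pos h1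
  have hΓxa : 0 < Real.Gamma (x+a) := Real.Gamma_pos_of_pos hxa
  have hrec : Real.Gamma x = (x - 1) * Real.Gamma (x - 1) := by
    conv_lhs => rw [show x = (x-1)+1 by ring, Real.Gamma_add_one h1.ne']
  have hlog : Real.log (Real.Gamma x) - Real.log (Real.Gamma (x-1)) = Real.log (x-1) := by
    rw [hrec, Real.log_mul h1.ne' hΓx1.ne']; ring
  rw [show x - (x-1) = 1 by ring, show x + a - x = a by ring, div_one, hlog, le_div_iff₀ ha] at hsl
  have h2 : Real.log (Real.Gamma x * (x-1)^a) ≤ Real.log (Real.Gamma (x+a)) := by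
    rw [Real.log_mul hΓx.ne' (by positivity), Real.log_rpow h1]
    linarith
  have hpos : 0 < Real.Gamma x * (x-1)^a := by positivity
  have := Real.exp_le_exp.2 h2
  rwa [Real.exp_log hpos, Real.exp_log hΓxa] at this

lemma summableML {a b r : ℝ} (ha : 0 < a) (hb : 0 < b) (hr : 0 < r) :
    Summable (fun k : ℕ => r ^ k / Real.Gamma (a * k + b)) := by
  apply summable_of_ratio_norm_eventually_le (show (1:ℝ)/2 < 1 by norm_num)
  obtain ⟨K, hK⟩ := exists_nat_ge ((max 2 (1 + (2*r) ^ a⁻¹) - b) / a)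
  filter_upwards [eventually_ge_atTop K] with k hk
  have hxK : max 2 (1 + (2*r) ^ a⁻¹) ≤ a * k + b := by
    rw [div_le_iff₀ ha] at hK
    have hKk : (K:ℝ) ≤ k := Nat.cast_le.2 hk
    nlinarith
  set x : ℝ := a * k + b with hxdef
  have hx2 : 2 ≤ x := le_trans (le_max_left _ _) hxK
  have h2r : 2 * r ≤ (x - 1) ^ a := by
    have h1 : (2*r) ^ a⁻¹ ≤ x - 1 := by
      have := le_trans (le_max_right _ _) hxK; linarith
    calc 2*r = ((2*r) ^ a⁻¹) ^ a := by
          rw [← Real.rpow_mul (by positivity : (0:ℝ) ≤ 2*r), inv_mul_cancel₀ ha.ne',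
            Real.rpow_one]
      _ ≤ (x-1)^a := Real.rpow_le_rpow (by positivity) h1 ha.le
  have hgr := gammaRatio hx2 ha
  have hΓx : 0 < Real.Gamma x := Real.Gamma_pos_of_pos (by linarith)
  have hΓxa : 0 < Real.Gamma (x + a) := Real.Gamma_pos_of_pos (by linarith)
  have harg : a * ((k+1 : ℕ):ℝ) + b = x + a := by push_cast; rw [hxdef]; ring
  rw [harg, Real.norm_eq_abs, Real.norm_eq_abs, abs_of_pos (by positivity),
    abs_of_pos (by positivity), pow_succ]
  have key : 2 * r * Real.Gamma x ≤ Real.Gamma (x+a) := by nlinarith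
  calc r^k * r / Real.Gamma (x+a) ≤ r^k * r / (2*r*Real.Gamma x) := by
        gcongr
      _ = 1/2 * (r^k / Real.Gamma x) := by field_simp

set_option maxHeartbeats 1000000 in
theorem stmt5 (n : ℕ) (hn : 2 ≤ n) (α : ℝ) (hα1 : 1 / (n : ℝ) ≤ α) (hα2 : α ≤ 1)
    (r : ℝ) (hr : 0 < r) :
    ML α 1 r ≥ (1 / r ^ (n - 1)) * ML α α r
      - (1 / r ^ (n - 1)) * ∑ k ∈ Finset.range (⌊(n : ℝ) - 1 + 1 / (2 * α)⌋.toNat + 1),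
          (1 / Real.Gamma (α + k * α)) * r ^ k
      + (1 / r ^ (n - 1)) * ∑ k ∈ Finset.Icc (n - 1) ⌊(n : ℝ) - 1 + 1 / (2 * α)⌋.toNat,
          (1 / Real.Gamma (1 + k * α - α * ((n : ℝ) - 1))) * r ^ k := by
  have hn0 : (0:ℝ) < n := by positivity
  have hn2 : (2:ℝ) ≤ n := by exact_mod_cast hn
  have hα0 : 0 < α := lt_of_lt_of_le (by positivity) hα1
  have hnα : 1 ≤ α * n := by
    rw [div_le_iff₀ hn0] at hα1; linarith
  set F : ℕ → ℝ := fun j => (1 / Real.Gamma (α + j * α)) * r ^ j with hF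
  set G : ℕ → ℝ := fun j => (1 / Real.Gamma (1 + j * α - α * ((n : ℝ) - 1))) * r ^ j with hG
  set m : ℕ := n - 1 with hmdef
  have hmcast : (m:ℝ) = (n:ℝ) - 1 := by
    rw [hmdef, Nat.cast_sub (by omega : 1 ≤ n)]; norm_num
  set v : ℝ := (n:ℝ) - 1 + 1/(2*α) with hvdef
  have hv0 : 0 ≤ v := by
    have h1 : 0 < 1/(2*α) := by positivity
    rw [hvdef]; linarith
  set N : ℕ := (⌊v⌋).toNat with hNdef
  have hNint : (N:ℤ) = ⌊v⌋ := Int.toNat_of_nonneg (Int.floor_nonneg.2 hv0)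
  have hNcast : (N:ℝ) = (⌊v⌋:ℝ) := by exact_mod_cast hNint
  have hmN : m ≤ N := by
    have h1 : (m:ℝ) ≤ v := by
      have h2 : 0 < 1/(2*α) := by positivity
      rw [hmcast, hvdef]; linarith
    have h2 : (m:ℤ) ≤ ⌊v⌋ := Int.le_floor.2 (by exact_mod_cast h1)
    omega
  have hkey : ∀ k : ℕ, N + 1 ≤ k → 1/2 < α * ((k:ℝ) - ((n:ℝ) - 1)) := by
    intro k hk
    have h1 : v < (k:ℝ) := by
      have h2 := Int.lt_floor_add_one v
      have h3 : ((N:ℝ) + 1) ≤ (k:ℝ) := by exact_mod_cast hk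
      rw [hNcast] at h3; linarith
    have h2 : 1/(2*α) < (k:ℝ) - ((n:ℝ)-1) := by rw [hvdef] at h1; linarith
    calc 1/2 = α * (1/(2*α)) := by field_simp
      _ < α * ((k:ℝ) - ((n:ℝ)-1)) := by exact mul_lt_mul_of_pos_left h2 hα0
  -- summability facts
  have hsumF : Summable F := by
    apply Summable.congr (summableML hα0 hα0 hr)
    intro k
    simp only [hF]
    rw [show α * (k:ℝ) + α = α + k * α by ring, one_div, inv_mul_eq_div]
  have hsum0 : Summable (fun k : ℕ => r ^ k / Real.Gamma (α * k + 1)) :=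
    summableML hα0 one_pos hr
  have hGshift : ∀ k : ℕ, G (k + m) = r ^ m * (r ^ k / Real.Gamma (α * k + 1)) := by
    intro k
    have harg : 1 + ((k + m : ℕ):ℝ) * α - α * ((n:ℝ) - 1) = α * k + 1 := by
      push_cast
      rw [hmcast]; ring
    simp only [hG, harg]
    rw [pow_add]; ring
  have hsumGm : Summable (fun k : ℕ => G (k + m)) := by
    apply Summable.congr (hsum0.mul_left (r ^ m))
    intro k; exact (hGshift k).symm
  have hsumGshift : Summable (fun k : ℕ => G (k + (N + 1 - m) + m)) :=
    (summable_nat_add_iff (f := fun j : ℕ => G (j + m)) (N + 1 - m)).2 hsumGm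
  have hsumGN : Summable (fun k : ℕ => G (k + (N + 1))) := by
    apply Summable.congr hsumGshift
    intro k; congr 1; omega
  have hsumFN : Summable (fun k : ℕ => F (k + (N + 1))) :=
    (summable_nat_add_iff (N + 1)).2 hsumF
  -- identity E2
  have E2 : ML α α r = (∑ k ∈ Finset.range (N+1), F k) + ∑' k : ℕ, F (k + (N+1)) := by
    have hml : ML α α r = ∑' j : ℕ, F j := by
      apply tsum_congr
      intro k
      simp only [hF]
      rw [show α * (k:ℝ) + α = α + k * α by ring, one_div, inv_mul_eq_div]
    rw [hml, ← Summable.sum_add_tsum_nat_add (N+1) hsumF]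
  -- identity E1
  have E1 : r ^ m * ML α 1 r
      = (∑ k ∈ Finset.Icc m N, G k) + ∑' k : ℕ, G (k + (N+1)) := by
    have hml : r ^ m * ML α 1 r = ∑' k : ℕ, G (k + m) := by
      have h0 : ML α 1 r = ∑' k : ℕ, r ^ k / Real.Gamma (α * k + 1) := rfl
      rw [h0, ← tsum_mul_left]
      exact tsum_congr fun k => (hGshift k).symm
    have hsplit := Summable.sum_add_tsum_nat_add' (f := fun j : ℕ => G (j + m)) (k := N + 1 - m)
      hsumGshift
    have hfin : ∑ i ∈ Finset.range (N + 1 - m), G (i + m) = ∑ k ∈ Finset.Icc m N, G k := by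
      rw [← Finset.Ico_add_one_right_eq_Icc, Finset.sum_Ico_eq_sum_range]
      exact Finset.sum_congr rfl fun i _ => by rw [Nat.add_comm]
    have htail : ∑' i : ℕ, G (i + (N + 1 - m) + m) = ∑' i : ℕ, G (i + (N + 1)) :=
      tsum_congr fun i => by congr 1; omega
    rw [hml, ← hsplit, hfin, htail]
  -- termwise comparison E3
  have E3 : ∑' k : ℕ, F (k + (N+1)) ≤ ∑' k : ℕ, G (k + (N+1)) := by
    apply Summable.tsum_le_tsum _ hsumFN hsumGN
    intro k
    set j : ℕ := k + (N+1) with hjdef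
    have hj : N + 1 ≤ j := by omega
    have hhalf := hkey j hj
    have hx32 : (3:ℝ)/2 ≤ 1 + (j:ℝ) * α - α * ((n:ℝ) - 1) := by nlinarith
    have hxy : 1 + (j:ℝ) * α - α * ((n:ℝ) - 1) ≤ α + (j:ℝ) * α := by nlinarith
    have hΓmono := gammaMono32 hx32 hxy
    have hΓpos : 0 < Real.Gamma (1 + (j:ℝ) * α - α * ((n:ℝ) - 1)) :=
      Real.Gamma_pos_of_pos (by linarith)
    simp only [hF, hG]
    exact mul_le_mul_of_nonneg_right
      (one_div_le_one_div_of_le hΓpos hΓmono) (pow_nonneg hr.le j)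
  -- conclude
  have hrm : (0:ℝ) < r ^ m := pow_pos hr m
  rw [ge_iff_le, show 1 / r ^ m * ML α α r - 1 / r ^ m * (∑ k ∈ Finset.range (N+1), F k)
      + 1 / r ^ m * (∑ k ∈ Finset.Icc m N, G k)
      = (ML α α r - (∑ k ∈ Finset.range (N+1), F k) + (∑ k ∈ Finset.Icc m N, G k)) / r ^ m
      by ring, div_le_iff₀ hrm]
  linarith [E1, E2, E3]
end
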